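/- (Uniqueness of the ergodic lift over a bi-strip) Let $S_0=\Pi(S)$ be an attracting bi-strip for $F$ with $S$ an attracting strip for $G$, suppose $S\cap S'=\emptyset$ where $S'$ is the mirrored strip, so that $\Pi|_S:S\to S_0$ and $\Pi|_{S'}:S'\to S_0$ are bijective conjugations, and let $\mu$ be the unique ergodic $G$-invariant measure on $S$ projecting to the symmetric Markov extension $\lambda$ of a Markov measure $\lambda_0$. Then $\Pi_*\mu$ is the unique ergodic $F$-invariant measure supported in $S_0$ whose base projection is $\lambda_0$. -/

import Mathlib

open Set Filter MeasureTheory Topology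

noncomputable section

/-- The base space `Σ_N = {1,…,N}^ℤ`. -/
abbrev BSeq (N : ℕ) := ℤ → Fin N

/-- The shift map on bilateral sequences. -/
def shiftSeq {α : Type*} (ξ : ℤ → α) : ℤ → α := fun n => ξ (n + 1)

/-- The unit interval. -/
def I01 : Set ℝ := Set.Icc 0 1

/-- Forward composition of fiber maps: `fw h ξ n = h (ξ (n-1)) ∘ ⋯ ∘ h (ξ 0)`. -/
def fw {α : Type*} (h : α → ℝ → ℝ) (ξ : ℤ → α) : ℕ → ℝ → ℝ
  | 0 => id
  | n + 1 => fun p => h (ξ (n : ℤ)) (fw h ξ n p)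

/-- The step skew-product `F(ξ,p) = (σξ, f_{ξ₀}(p))`. -/
def Fmap {N : ℕ} (f : Fin N → ℝ → ℝ) (z : BSeq N × ℝ) : BSeq N × ℝ :=
  (shiftSeq z.1, f (z.1 0) z.2)


/-- Doubled symbol set `{1,…,2N}`: `(i, false)` is `i`, `(i, true)` is `i + N`. -/
abbrev DSym (N : ℕ) := Fin N × Bool

/-- `A`-admissibility for the orientation-doubling transition matrix, where
`part i = true` iff `f i` is orientation preserving. -/
def Admissible {N : ℕ} (part : Fin N → Bool) (ω : ℤ → DSym N) : Prop :=
  ∀ n : ℤ, (ω (n + 1)).2 = xor ((ω n).2) (!(part (ω n).1))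

/-- The subshift of finite type `Σ_A` of `A`-admissible bilateral sequences. -/
abbrev SigmaA (N : ℕ) (part : Fin N → Bool) := {ω : ℤ → DSym N // Admissible part ω}

/-- The shift map `σ_A` on `Σ_A`. -/
def shiftA {N : ℕ} {part : Fin N → Bool} (ω : SigmaA N part) : SigmaA N part :=
  ⟨shiftSeq ω.1, fun n => ω.2 (n + 1)⟩

/-- The 2-to-1 projection `π : Σ_A → Σ_N`, `π(ω)_n = ω_n mod N`. -/
def piA {N : ℕ} {part : Fin N → Bool} (ω : SigmaA N part) : BSeq N :=
  fun n => (ω.1 n).1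

/-- The reflection `R(x) = 1 - x`. -/
def R : ℝ → ℝ := fun x => 1 - x

/-- The fiber maps of the extended step skew-product:
`g_i = f_i`, `g_{i+N} = R∘f_i∘R` for orientation-preserving `f_i`, and
`g_i = R∘f_i`, `g_{i+N} = f_i∘R` for orientation-reversing `f_i`. -/
def gmap {N : ℕ} (f : Fin N → ℝ → ℝ) (part : Fin N → Bool) : DSym N → ℝ → ℝ :=
  fun s =>
    if part s.1 then (if s.2 then R ∘ f s.1 ∘ R else f s.1)
    else (if s.2 then f s.1 ∘ R else R ∘ f s.1)

/-- The extended step skew-product `G(ω,x) = (σ_A ω, g_{ω₀}(x))`. -/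
def Gmap {N : ℕ} {part : Fin N → Bool} (f : Fin N → ℝ → ℝ)
    (z : SigmaA N part × ℝ) : SigmaA N part × ℝ :=
  (shiftA z.1, gmap f part (z.1.1 0) z.2)

/-- The 2-to-1 projection `Π : Σ_A × I → Σ_N × I`. -/
def PiMap {N : ℕ} {part : Fin N → Bool} (z : SigmaA N part × ℝ) : BSeq N × ℝ :=
  (piA z.1, if (z.1.1 0).2 then R z.2 else z.2)

/-- Orientation hypothesis: `part` records which fiber maps preserve orientation. -/
def OrientPart {N : ℕ} (f : Fin N → ℝ → ℝ) (part : Fin N → Bool) : Prop :=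
  ∀ i, (part i = true → StrictMonoOn (f i) I01) ∧ (part i = false → StrictAntiOn (f i) I01)

open scoped ENNReal

/-- The cylinder `[m; w₀ … w_k]`. -/
def cylinder {α : Type*} (m : ℤ) (k : ℕ) (w : ℕ → α) : Set (ℤ → α) :=
  {η | ∀ i : ℕ, i ≤ k → η (m + i) = w i}

/-- `lam` is the Markov measure with probability vector `p` and transition matrix `P`. -/
def IsMarkov {α : Type*} [MeasurableSpace α] (lam : MeasureTheory.Measure (ℤ → α))
    (p : α → ℝ≥0∞) (P : α → α → ℝ≥0∞) : Prop :=
  ∀ (m : ℤ) (k : ℕ) (w : ℕ → α),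
    lam (cylinder m k w) = p (w 0) * ∏ i ∈ Finset.range k, P (w i) (w (i + 1))

/-- Stochasticity and stationarity of the pair `(p, P)`. -/
def IsStochastic {α : Type*} [Fintype α] (p : α → ℝ≥0∞) (P : α → α → ℝ≥0∞) : Prop :=
  (∑ a, p a) = 1 ∧ (∀ a, (∑ b, P a b) = 1) ∧ (∀ b, (∑ a, p a * P a b) = p b)

/-- Symmetry of a Markov pair on the doubled alphabet: `p_i = p_{i+N}`,
`P_{ij} = P_{(i+N)(j+N)}` and `P_{i(j+N)} = P_{(i+N)j}`. -/
def SymMarkov {N : ℕ} (p : DSym N → ℝ≥0∞) (P : DSym N → DSym N → ℝ≥0∞) : Prop :=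
  (∀ s : DSym N, p s = p (s.1, !s.2)) ∧
  (∀ s t : DSym N, P s t = P (s.1, !s.2) (t.1, !t.2))

/-- Compatibility of the transition matrix with the admissibility matrix `A`. -/
def CompatA {N : ℕ} (part : Fin N → Bool) (P : DSym N → DSym N → ℝ≥0∞) : Prop :=
  ∀ s t : DSym N, t.2 ≠ xor s.2 (!(part s.1)) → P s t = 0

/-- Projection of doubled sequences to `Σ_N`. -/
def projSeq {N : ℕ} (ω : ℤ → DSym N) : BSeq N := fun n => (ω n).1

/-- The mirror involution on `Σ_A`, swapping `i ↔ i+N` in each coordinate. -/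
def mirrorA {N : ℕ} {part : Fin N → Bool} (ω : SigmaA N part) : SigmaA N part :=
  ⟨fun n => ((ω.1 n).1, !(ω.1 n).2), by
    intro n
    show (!(ω.1 (n + 1)).2) = xor (!(ω.1 n).2) (!(part (ω.1 n).1))
    rw [ω.2 n]
    cases (ω.1 n).2 <;> cases part (ω.1 n).1 <;> rfl⟩

/-- The mirror involution `τ` on `Σ_A × I`. -/
def tauMap {N : ℕ} {part : Fin N → Bool} (z : SigmaA N part × ℝ) : SigmaA N part × ℝ :=
  (mirrorA z.1, R z.2)

/-- Base projection `Σ_A × I → Σ_{2N}`. -/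
def baseA {N : ℕ} {part : Fin N → Bool} (z : SigmaA N part × ℝ) : ℤ → DSym N := z.1.1

/-- The strip between the graphs of `φ` and `ψ`. -/
def strip {β : Type*} (φ ψ : β → ℝ) : Set (β × ℝ) :=
  {z | φ z.1 ≤ z.2 ∧ z.2 ≤ ψ z.1}
namespace BiStrip

/-- forward xor-cocycle -/
def dF {N : ℕ} (part : Fin N → Bool) (ξ : BSeq N) : ℕ → Bool
  | 0 => false
  | m+1 => xor (dF part ξ m) (!(part (ξ m)))

/-- backward xor-cocycle -/
def dB {N : ℕ} (part : Fin N → Bool) (ξ : BSeq N) : ℕ → Bool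
  | 0 => false
  | m+1 => xor (dB part ξ m) (!(part (ξ (Int.negSucc m))))

def cb {N : ℕ} (part : Fin N → Bool) (ξ : BSeq N) : ℤ → Bool
  | Int.ofNat m => dF part ξ m
  | Int.negSucc m => dB part ξ (m+1)

lemma cb_zero {N : ℕ} (part : Fin N → Bool) (ξ : BSeq N) : cb part ξ 0 = false := rfl

lemma cb_succ {N : ℕ} (part : Fin N → Bool) (ξ : BSeq N) (n : ℤ) :
    cb part ξ (n + 1) = xor (cb part ξ n) (!(part (ξ n))) := by
  cases n with
  | ofNat m =>
    have h : (Int.ofNat m) + 1 = Int.ofNat (m+1) := rfl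
    rw [h]
    rfl
  | negSucc m =>
    cases m with
    | zero =>
      have h : Int.negSucc 0 + 1 = 0 := rfl
      rw [h]
      show false = xor (dB part ξ 1) (!(part (ξ (Int.negSucc 0))))
      show false = xor (xor false (!(part (ξ (Int.negSucc 0))))) (!(part (ξ (Int.negSucc 0))))
      cases part (ξ (Int.negSucc 0)) <;> rfl
    | succ m =>
      have h : Int.negSucc (m+1) + 1 = Int.negSucc m := rfl
      rw [h]
      show dB part ξ (m+1) = xor (dB part ξ (m+2)) (!(part (ξ (Int.negSucc (m+1)))))
      show dB part ξ (m+1) = xor (xor (dB part ξ (m+1)) (!(part (ξ (Int.negSucc (m+1))))))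
        (!(part (ξ (Int.negSucc (m+1)))))
      cases dB part ξ (m+1) <;> cases part (ξ (Int.negSucc (m+1))) <;> rfl

lemma int_const (g : ℤ → Bool) (h : ∀ n, g (n + 1) = g n) : ∀ n, g n = g 0 := by
  intro n
  induction n using Int.induction_on with
  | zero => rfl
  | succ i ih => rw [h i]; exact ih
  | pred i ih =>
    have h2 := h (-(i:ℤ) - 1)
    have h3 : -(i:ℤ) - 1 + 1 = -(i:ℤ) := by ring
    rw [h3] at h2
    rw [← h2]; exact ih

variable {N : ℕ} {part : Fin N → Bool}

def wfun (part : Fin N → Bool) (ξ : BSeq N) (b : Bool) : ℤ → DSym N :=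
  fun n => (ξ n, xor b (cb part ξ n))

lemma wfun_adm (ξ : BSeq N) (b : Bool) : Admissible part (wfun part ξ b) := by
  intro n
  show xor b (cb part ξ (n+1)) = xor (xor b (cb part ξ n)) (!(part (ξ n)))
  rw [cb_succ]
  cases b <;> cases cb part ξ n <;> cases part (ξ n) <;> rfl

/-- the sheet lift `(ξ, x, b) ↦ (ω(ξ,b), x or R x)` -/
def liftB (part : Fin N → Bool) (q : (BSeq N × ℝ) × Bool) : SigmaA N part × ℝ :=
  (⟨wfun part q.1.1 q.2, wfun_adm _ _⟩, if q.2 then R q.1.2 else q.1.2)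

lemma RR (x : ℝ) : R (R x) = x := by simp [R]

lemma wfun_zero (ξ : BSeq N) (b : Bool) : wfun part ξ b 0 = (ξ 0, b) := by
  show (ξ 0, xor b (cb part ξ 0)) = (ξ 0, b)
  rw [cb_zero, Bool.xor_false]

lemma PiMap_lift (q : (BSeq N × ℝ) × Bool) : PiMap (liftB part q) = q.1 := by
  obtain ⟨⟨ξ, x⟩, b⟩ := q
  have h0 : ((liftB part ((ξ, x), b)).1.1 0).2 = b := by
    show (wfun part ξ b 0).2 = b
    rw [wfun_zero]
  apply Prod.ext
  · rfl
  · show (if ((liftB part ((ξ, x), b)).1.1 0).2 then R (liftB part ((ξ,x),b)).2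
      else (liftB part ((ξ,x),b)).2) = x
    rw [h0]
    show (if b then R (if b then R x else x) else (if b then R x else x)) = x
    cases b
    · simp
    · simp [RR]

/-- reconstruction of admissible sequences from projection and bit at 0 -/
lemma wfun_reconstruct (ω : SigmaA N part) :
    ω.1 = wfun part (piA ω) ((ω.1 0).2) := by
  funext n
  have key : ∀ n, xor ((ω.1 n).2) (cb part (piA ω) n) = (ω.1 0).2 := by
    have := int_const (fun n => xor ((ω.1 n).2) (cb part (piA ω) n)) ?_
    · intro n
      have h0 := this n
      simpa [cb_zero] using h0
    · intro n
      show xor ((ω.1 (n+1)).2) (cb part (piA ω) (n+1)) = xor ((ω.1 n).2) (cb part (piA ω) n)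
      rw [ω.2 n, cb_succ]
      show xor (xor _ (!(part ((ω.1 n).1)))) (xor _ (!(part ((ω.1 n).1)))) = _
      cases (ω.1 n).2 <;> cases cb part (piA ω) n <;> cases part ((ω.1 n).1) <;> rfl
  show ω.1 n = (piA ω n, xor ((ω.1 0).2) (cb part (piA ω) n))
  have h1 : (ω.1 n).1 = piA ω n := rfl
  have h2 : (ω.1 n).2 = xor ((ω.1 0).2) (cb part (piA ω) n) := by
    have := key n
    cases hb : (ω.1 n).2 <;> cases hc : cb part (piA ω) n <;>
      rw [hb, hc] at this <;> simp at this <;> simp [this]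
  rw [← h1, ← h2]

lemma lift_recon (z : SigmaA N part × ℝ) :
    liftB part (PiMap z, (z.1.1 0).2) = z := by
  obtain ⟨ω, x⟩ := z
  apply Prod.ext
  · apply Subtype.ext
    show wfun part (piA ω) ((ω.1 0).2) = ω.1
    exact (wfun_reconstruct ω).symm
  · show (if (ω.1 0).2 then R (if (ω.1 0).2 then R x else x)
      else (if (ω.1 0).2 then R x else x)) = x
    cases h : (ω.1 0).2 <;> simp [RR]

end BiStrip
namespace BiStrip
variable {N : ℕ} {part : Fin N → Bool}

lemma cb_one (ξ : BSeq N) : cb part ξ 1 = !(part (ξ 0)) := by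
  show dF part ξ 1 = !(part (ξ 0))
  show xor (dF part ξ 0) (!(part (ξ 0))) = !(part (ξ 0))
  cases part (ξ 0) <;> rfl

lemma cb_shift (ξ : BSeq N) (n : ℤ) :
    cb part ξ (n + 1) = xor (!(part (ξ 0))) (cb part (shiftSeq ξ) n) := by
  have key := int_const (fun n => xor (cb part ξ (n+1)) (cb part (shiftSeq ξ) n)) ?_ n
  · simp only [cb_zero, Bool.xor_false, zero_add] at key
    rw [cb_one] at key
    have : ∀ a b c : Bool, xor a b = c → a = xor c b := by decide
    exact this _ _ _ key
  · intro m
    show xor (cb part ξ (m+1+1)) (cb part (shiftSeq ξ) (m+1))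
      = xor (cb part ξ (m+1)) (cb part (shiftSeq ξ) m)
    rw [cb_succ part ξ (m+1), cb_succ part (shiftSeq ξ) m]
    have hs : shiftSeq ξ m = ξ (m + 1) := rfl
    rw [hs]
    cases cb part ξ (m+1) <;> cases cb part (shiftSeq ξ) m <;> cases part (ξ (m+1)) <;> rfl

lemma lift_shiftA (ξ : BSeq N) (b : Bool) :
    shiftA (⟨wfun part ξ b, wfun_adm ξ b⟩ : SigmaA N part)
      = ⟨wfun part (shiftSeq ξ) (xor b (!(part (ξ 0)))), wfun_adm _ _⟩ := by
  apply Subtype.ext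
  funext n
  show (ξ (n+1), xor b (cb part ξ (n+1)))
    = (shiftSeq ξ n, xor (xor b (!(part (ξ 0)))) (cb part (shiftSeq ξ) n))
  have hs : shiftSeq ξ n = ξ (n + 1) := rfl
  rw [hs, cb_shift]
  cases b <;> cases part (ξ 0) <;> cases cb part (shiftSeq ξ) n <;> rfl

lemma lift_G (f : Fin N → ℝ → ℝ) (q : (BSeq N × ℝ) × Bool) :
    Gmap f (liftB part q) = liftB part (Fmap f q.1, xor q.2 (!(part (q.1.1 0)))) := by
  obtain ⟨⟨ξ, x⟩, b⟩ := q
  apply Prod.ext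
  · show shiftA (⟨wfun part ξ b, wfun_adm ξ b⟩ : SigmaA N part)
      = ⟨wfun part (shiftSeq ξ) (xor b (!(part (ξ 0)))), wfun_adm _ _⟩
    exact lift_shiftA ξ b
  · show gmap f part (wfun part ξ b 0) (if b then R x else x)
      = (if xor b (!(part (ξ 0))) then R (f (ξ 0) x) else f (ξ 0) x)
    rw [wfun_zero]
    cases hp : part (ξ 0) <;> cases b <;>
      simp [gmap, hp, RR]

lemma lift_tau (q : (BSeq N × ℝ) × Bool) :
    tauMap (liftB part q) = liftB part (q.1, !q.2) := by
  obtain ⟨⟨ξ, x⟩, b⟩ := q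
  apply Prod.ext
  · apply Subtype.ext
    funext n
    show ((wfun part ξ b n).1, !(wfun part ξ b n).2) = wfun part ξ (!b) n
    show ((ξ n), !(xor b (cb part ξ n))) = (ξ n, xor (!b) (cb part ξ n))
    cases b <;> cases cb part ξ n <;> rfl
  · show R (if b then R x else x) = (if !b then R x else x)
    cases b <;> simp [RR]

lemma Pi_semiconj (f : Fin N → ℝ → ℝ) (z : SigmaA N part × ℝ) :
    PiMap (Gmap f z) = Fmap f (PiMap z) := by
  conv_lhs => rw [← lift_recon z]
  rw [lift_G, PiMap_lift]

def m2 {N : ℕ} (η : ℤ → DSym N) : ℤ → DSym N := fun n => ((η n).1, !(η n).2)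

lemma baseA_G (f : Fin N → ℝ → ℝ) (z : SigmaA N part × ℝ) :
    baseA (Gmap f z) = shiftSeq (baseA z) := rfl

lemma baseA_tau (z : SigmaA N part × ℝ) : baseA (tauMap z) = m2 (baseA z) := rfl

lemma baseA_lift (q : (BSeq N × ℝ) × Bool) :
    baseA (liftB part q : SigmaA N part × ℝ) = wfun part q.1.1 q.2 := rfl

lemma m2_wfun (ξ : BSeq N) (b : Bool) :
    m2 (wfun part ξ b) = wfun part ξ (!b) := by
  funext n
  show ((ξ n), !(xor b (cb part ξ n))) = (ξ n, xor (!b) (cb part ξ n))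
  cases b <;> cases cb part ξ n <;> rfl

lemma baseA_reconstruct (z : SigmaA N part × ℝ) :
    baseA z = wfun part (piA z.1) ((z.1.1 0).2) := wfun_reconstruct z.1

end BiStrip
namespace BiStrip
variable {N : ℕ} {part : Fin N → Bool}

instance sigmaA_borel (N : ℕ) (part : Fin N → Bool) : BorelSpace (SigmaA N part) :=
  Subtype.borelSpace {ω : ℤ → DSym N | Admissible part ω}

instance sigmaA_sc (N : ℕ) (part : Fin N → Bool) :
    SecondCountableTopology (SigmaA N part) :=
  inferInstanceAs (SecondCountableTopology {ω : ℤ → DSym N | Admissible part ω})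

example (N : ℕ) (part : Fin N → Bool) :
    OpensMeasurableSpace (SigmaA N part × ℝ) := by infer_instance

lemma meas_projSeq : Measurable (projSeq (N := N)) :=
  measurable_pi_lambda _ fun n => measurable_fst.comp (measurable_pi_apply n)

lemma meas_baseA : Measurable (baseA (N := N) (part := part)) :=
  measurable_subtype_coe.comp measurable_fst

lemma meas_piA : Measurable (piA (N := N) (part := part)) :=
  measurable_pi_lambda _ fun n =>
    measurable_fst.comp ((measurable_pi_apply n).comp measurable_subtype_coe)

lemma meas_m2 : Measurable (m2 (N := N)) :=
  measurable_pi_lambda _ fun n =>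
    (measurable_of_countable (fun s : DSym N => (s.1, !s.2))).comp (measurable_pi_apply n)

lemma meas_shiftSeq {α : Type*} [MeasurableSpace α] : Measurable (shiftSeq (α := α)) :=
  measurable_pi_lambda _ fun n => measurable_pi_apply (n + 1)

lemma meas_shiftA : Measurable (shiftA (N := N) (part := part)) :=
  Measurable.subtype_mk (meas_shiftSeq.comp measurable_subtype_coe)

lemma meas_mirrorA : Measurable (mirrorA (N := N) (part := part)) :=
  Measurable.subtype_mk (meas_m2.comp measurable_subtype_coe)

lemma meas_R : Measurable R := (continuous_const.sub continuous_id).measurable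

lemma meas_tauMap : Measurable (tauMap (N := N) (part := part)) :=
  (meas_mirrorA.comp measurable_fst).prodMk (meas_R.comp measurable_snd)

lemma meas_dF (m : ℕ) : Measurable (fun ξ : BSeq N => dF part ξ m) := by
  induction m with
  | zero => exact measurable_const
  | succ m ih =>
    exact (measurable_of_countable (fun p : Bool × Fin N => xor p.1 (!(part p.2)))).comp
      (ih.prodMk (measurable_pi_apply (m : ℤ)))

lemma meas_dB (m : ℕ) : Measurable (fun ξ : BSeq N => dB part ξ m) := by
  induction m with
  | zero => exact measurable_const
  | succ m ih =>
    exact (measurable_of_countable (fun p : Bool × Fin N => xor p.1 (!(part p.2)))).comp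
      (ih.prodMk (measurable_pi_apply (Int.negSucc m)))

lemma meas_cb (n : ℤ) : Measurable (fun ξ : BSeq N => cb part ξ n) := by
  cases n with
  | ofNat m => exact meas_dF m
  | negSucc m => exact meas_dB (m+1)

lemma meas_wfun_fixed (b : Bool) :
    Measurable (fun ξ : BSeq N => wfun part ξ b) :=
  measurable_pi_lambda _ fun n =>
    (measurable_pi_apply n).prodMk
      ((measurable_of_countable (fun c : Bool => xor b c)).comp (meas_cb n))

lemma meas_bit0 : Measurable (fun z : SigmaA N part × ℝ => (z.1.1 0).2) :=
  measurable_snd.comp ((measurable_pi_apply 0).comp meas_baseA)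

lemma meas_PiMap : Measurable (PiMap (N := N) (part := part)) := by
  apply Measurable.prodMk
  · exact meas_piA.comp measurable_fst
  · have hc : MeasurableSet {z : SigmaA N part × ℝ | (z.1.1 0).2 = true} :=
      meas_bit0 (MeasurableSet.singleton true)
    exact Measurable.ite hc (meas_R.comp measurable_snd) measurable_snd

lemma meas_liftB : Measurable (liftB part (N := N)) := by
  apply Measurable.prodMk
  · apply Measurable.subtype_mk
    have : Measurable (fun q : (BSeq N × ℝ) × Bool => (q.1.1, q.2)) :=
      (measurable_fst.comp measurable_fst).prodMk measurable_snd
    exact (measurable_pi_lambda _ fun n =>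
      ((measurable_pi_apply n).comp measurable_fst).prodMk
        ((measurable_of_countable (fun p : Bool × Bool => xor p.1 p.2)).comp
          (measurable_snd.prodMk ((meas_cb n).comp measurable_fst)))).comp this
  · have hc : MeasurableSet {q : (BSeq N × ℝ) × Bool | q.2 = true} :=
      measurable_snd (MeasurableSet.singleton true)
    exact Measurable.ite hc (meas_R.comp (measurable_snd.comp measurable_fst))
      (measurable_snd.comp measurable_fst)

lemma cont_gmap (f : Fin N → ℝ → ℝ) (hcont : ∀ i, Continuous (f i)) (s : DSym N) :
    Continuous (gmap f part s) := by
  have hR : Continuous R := continuous_const.sub continuous_id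
  rcases s with ⟨i, b⟩
  by_cases hp : part i <;> cases b <;> simp [gmap, hp] <;> continuity

lemma meas_Gmap (f : Fin N → ℝ → ℝ) (hcont : ∀ i, Continuous (f i)) :
    Measurable (Gmap f (part := part)) := by
  apply Measurable.prodMk
  · exact meas_shiftA.comp measurable_fst
  · have h1 : Measurable (fun p : ℝ × DSym N => gmap f part p.2 p.1) :=
      measurable_from_prod_countable_left fun s => (cont_gmap f hcont s).measurable
    exact h1.comp (measurable_snd.prodMk
      ((measurable_pi_apply 0).comp meas_baseA))

lemma meas_Fmap (f : Fin N → ℝ → ℝ) (hcont : ∀ i, Continuous (f i)) :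
    Measurable (Fmap f (N := N)) := by
  apply Measurable.prodMk
  · exact meas_shiftSeq.comp measurable_fst
  · have h1 : Measurable (fun p : ℝ × Fin N => f p.2 p.1) :=
      measurable_from_prod_countable_left fun i => (hcont i).measurable
    exact h1.comp (measurable_snd.prodMk
      ((measurable_pi_apply 0).comp measurable_fst))

end BiStrip
namespace BiStrip

open scoped ENNReal

theorem ergodic_map_of_semiconj {X Y : Type*} [MeasurableSpace X] [MeasurableSpace Y]
    {T : X → X} {Sh : Y → Y} {π : X → Y} (hπ : Measurable π) (hSh : Measurable Sh)
    {μ : Measure X} (hsemi : ∀ x, Sh (π x) = π (T x)) (h : Ergodic T μ) :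
    Ergodic Sh (μ.map π) := by
  have hT : Measurable T := h.toMeasurePreserving.measurable
  constructor
  · refine ⟨hSh, ?_⟩
    rw [Measure.map_map hSh hπ]
    have : Sh ∘ π = π ∘ T := funext hsemi
    rw [this, ← Measure.map_map hπ hT, h.toMeasurePreserving.map_eq]
  · constructor
    intro s hs hinv
    rw [Filter.eventuallyConst_set']
    have hpre : T ⁻¹' (π ⁻¹' s) = π ⁻¹' s := by
      ext x
      simp only [Set.mem_preimage]
      rw [← hsemi x, ← Set.mem_preimage, hinv]
    rcases h.toPreErgodic.ae_empty_or_univ (hπ hs) hpre with h' | h'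
    · left
      rw [ae_eq_empty] at h' ⊢
      rwa [Measure.map_apply hπ hs]
    · right
      rw [ae_eq_univ] at h' ⊢
      rw [Measure.map_apply hπ hs.compl, Set.preimage_compl]
      exact h'

/-- An invariant probability measure absolutely continuous w.r.t. an ergodic invariant
probability measure of an invertible map equals it. -/
theorem eq_of_ergodic_absCont {X : Type*} [MeasurableSpace X] {T T' : X → X}
    (hT' : Measurable T') (h1 : ∀ x, T' (T x) = x) (h2 : ∀ x, T (T' x) = x)
    {lam κ : Measure X} [IsProbabilityMeasure lam] [IsProbabilityMeasure κ]
    (herg : Ergodic T lam) (hκT : κ.map T = κ) (hac : κ ≪ lam) : κ = lam := by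
  have hT : Measurable T := herg.toMeasurePreserving.measurable
  set ρ := κ.rnDeriv lam with hρdef
  have hρ : Measurable ρ := Measure.measurable_rnDeriv _ _
  have hwd : lam.withDensity ρ = κ := Measure.withDensity_rnDeriv_eq _ _ hac
  have hmass : ∫⁻ x, ρ x ∂lam = 1 := by
    have h := measure_univ (μ := κ)
    rw [← hwd, withDensity_apply _ MeasurableSet.univ, Measure.restrict_univ] at h
    exact h
  have hcomp : lam.withDensity (ρ ∘ T) = κ := by
    ext A hA
    rw [withDensity_apply _ hA]
    have hAeq : A = T ⁻¹' (T' ⁻¹' A) := by ext x; simp [h1]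
    have hA' : MeasurableSet (T' ⁻¹' A) := hT' hA
    calc ∫⁻ x in A, (ρ ∘ T) x ∂lam
        = ∫⁻ x in T ⁻¹' (T' ⁻¹' A), ρ (T x) ∂lam := by rw [← hAeq]; rfl
      _ = ∫⁻ y in T' ⁻¹' A, ρ y ∂(lam.map T) := (setLIntegral_map hA' hρ hT).symm
      _ = ∫⁻ y in T' ⁻¹' A, ρ y ∂lam := by rw [herg.toMeasurePreserving.map_eq]
      _ = κ (T' ⁻¹' A) := by rw [← withDensity_apply _ hA', hwd]
      _ = κ A := by
          conv_lhs => rw [← hκT]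
          rw [Measure.map_apply hT hA', ← hAeq]
  have hmass' : ∫⁻ x, (ρ ∘ T) x ∂lam = 1 := by
    have h := measure_univ (μ := κ)
    rw [← hcomp, withDensity_apply _ MeasurableSet.univ, Measure.restrict_univ] at h
    exact h
  have hae : ρ ∘ T =ᵐ[lam] ρ :=
    (withDensity_eq_iff (hρ.comp hT).aemeasurable hρ.aemeasurable
      (by rw [hmass']; exact ENNReal.one_ne_top)).1 (hcomp.trans hwd.symm)
  -- each sub/super-level set of ρ has measure 0 or 1
  have hlevel : ∀ s : Set ℝ≥0∞, MeasurableSet s →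
      lam (ρ ⁻¹' s) = 0 ∨ lam ((ρ ⁻¹' s)ᶜ) = 0 := by
    intro s hs
    have hinv : T ⁻¹' (ρ ⁻¹' s) =ᵐ[lam] ρ ⁻¹' s := by
      rw [Filter.eventuallyEq_set]
      exact hae.mono fun x hx => by
        simp only [Set.mem_preimage, Function.comp_apply] at hx ⊢
        rw [hx]
    rcases herg.quasiErgodic.ae_empty_or_univ₀ ((hρ hs).nullMeasurableSet) hinv with h' | h'
    · left; rwa [ae_eq_empty] at h'
    · right; rwa [ae_eq_univ] at h'
  have hlt := hlevel (Set.Iio 1) measurableSet_Iio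
  have hgt := hlevel (Set.Ioi 1) measurableSet_Ioi
  have habs : ∀ s : Set X, lam sᶜ = 0 → (∀ᵐ x ∂lam, x ∈ s) := by
    intro s hs
    rw [ae_iff]
    convert hs using 2
    rfl
  rcases hlt with hlt0 | hlt1
  · rcases hgt with hgt0 | hgt1
    · -- ρ = 1 a.e.
      have hone : ρ =ᵐ[lam] fun _ => 1 := by
        have h1' : ∀ᵐ x ∂lam, ¬(ρ x < 1) := by
          rw [ae_iff]; simp only [not_not]; exact hlt0
        have h2' : ∀ᵐ x ∂lam, ¬(1 < ρ x) := by
          rw [ae_iff]; simp only [not_not]; exact hgt0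
        filter_upwards [h1', h2'] with x hx1 hx2
        exact le_antisymm (not_lt.1 hx2) (not_lt.1 hx1)
      rw [← hwd, withDensity_congr_ae hone]
      exact withDensity_one
    · -- 1 < ρ a.e. : contradiction
      exfalso
      have hge : (fun _ : X => (1:ℝ≥0∞)) ≤ᵐ[lam] ρ := by
        refine (habs _ hgt1).mono fun x hx => ?_
        exact le_of_lt hx
      have hsub : ∫⁻ x, ρ x - 1 ∂lam = 0 := by
        rw [lintegral_sub measurable_const (by simp) hge, hmass]
        simp
      have : (fun x => ρ x - 1) =ᵐ[lam] 0 :=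
        (lintegral_eq_zero_iff (hρ.sub measurable_const)).1 hsub
      have hle : ∀ᵐ x ∂lam, ρ x ≤ 1 := this.mono fun x hx => by
        simpa [tsub_eq_zero_iff_le] using hx
      have hff : ∀ᵐ x ∂lam, False := by
        filter_upwards [habs _ hgt1, hle] with x hx1 hx2
        exact absurd (lt_of_lt_of_le hx1 hx2) (lt_irrefl 1)
      haveI : (ae lam).NeBot := ae_neBot.2 (IsProbabilityMeasure.ne_zero lam)
      obtain ⟨x, hx⟩ := hff.exists
      exact hx
  · -- ρ < 1 a.e. : contradiction
    exfalso
    have hlt : ∀ᵐ x ∂lam, ρ x < 1 := habs _ hlt1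
    have hle' : ρ ≤ᵐ[lam] fun _ => 1 := hlt.mono fun x hx => le_of_lt hx
    have hsub : ∫⁻ x, 1 - ρ x ∂lam = 0 := by
      rw [lintegral_sub hρ (by rw [hmass]; exact ENNReal.one_ne_top) hle']
      rw [hmass, lintegral_one, measure_univ]
      simp
    have hz : (fun x => 1 - ρ x) =ᵐ[lam] 0 :=
      (lintegral_eq_zero_iff (measurable_const.sub hρ)).1 hsub
    have hge : ∀ᵐ x ∂lam, (1:ℝ≥0∞) ≤ ρ x := hz.mono fun x hx => by
      simpa [tsub_eq_zero_iff_le] using hx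
    have hff : ∀ᵐ x ∂lam, False := by
      filter_upwards [hlt, hge] with x hx1 hx2
      exact absurd (lt_of_le_of_lt hx2 hx1) (lt_irrefl 1)
    haveI : (ae lam).NeBot := ae_neBot.2 (IsProbabilityMeasure.ne_zero lam)
    obtain ⟨x, hx⟩ := hff.exists
    exact hx

end BiStrip
namespace BiStrip

lemma measurableSet_cylinder {α : Type*} [MeasurableSpace α] [MeasurableSingletonClass α]
    (m : ℤ) (k : ℕ) (w : ℕ → α) : MeasurableSet (_root_.cylinder m k w) := by
  have : _root_.cylinder m k w = ⋂ i ∈ Finset.range (k+1), (fun η : ℤ → α => η (m+i)) ⁻¹' {w i} := by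
    ext η
    simp only [_root_.cylinder, Set.mem_setOf_eq, Set.mem_iInter, Set.mem_preimage,
      Set.mem_singleton_iff, Finset.mem_range]
    constructor
    · intro h i hi; exact h i (Nat.lt_succ_iff.1 hi)
    · intro h i hi; exact h i (Nat.lt_succ_iff.2 hi)
  rw [this]
  exact MeasurableSet.biInter (Finset.range (k+1)).countable_toSet
    fun i _ => (measurable_pi_apply (m+i)) (MeasurableSet.singleton (w i))

/-- Two probability measures on a bilateral sequence space over a finite alphabet that
agree on all contiguous cylinders are equal. -/
theorem ext_of_cylinders {α : Type*} [MeasurableSpace α] [MeasurableSingletonClass α]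
    [Finite α] (μ ν : Measure (ℤ → α)) [IsProbabilityMeasure μ] [IsProbabilityMeasure ν]
    (h : ∀ (m : ℤ) (k : ℕ) (w : ℕ → α), μ (_root_.cylinder m k w) = ν (_root_.cylinder m k w)) :
    μ = ν := by
  classical
  refine ext_of_generate_finite _ generateFrom_measurableCylinders.symm
    isPiSystem_measurableCylinders ?_ (by simp)
  intro t ht
  obtain ⟨s, S, hSmeas, rfl⟩ := (mem_measurableCylinders t).1 ht
  clear ht hSmeas
  have hne : Nonempty (ℤ → α) := by
    by_contra hcon
    have huniv : (Set.univ : Set (ℤ → α)) = ∅ := by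
      ext x; exact absurd ⟨x⟩ hcon
    have h1 := measure_univ (μ := μ)
    rw [huniv] at h1
    simp at h1
  obtain ⟨η0⟩ := hne
  rcases s.eq_empty_or_nonempty with rfl | hs
  · by_cases hmem : (Finset.restrict (∅ : Finset ℤ) η0) ∈ S
    · have huniv : MeasureTheory.cylinder (α := fun _ : ℤ => α) (∅ : Finset ℤ) S = Set.univ := by
        apply Set.eq_univ_of_forall
        intro η
        show Finset.restrict ∅ η ∈ S
        have heq : Finset.restrict (∅ : Finset ℤ) η = Finset.restrict ∅ η0 := by
          funext i
          exact absurd i.2 (Finset.notMem_empty _)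
        rw [heq]; exact hmem
      rw [huniv]; simp
    · have hempty : MeasureTheory.cylinder (α := fun _ : ℤ => α) (∅ : Finset ℤ) S = ∅ := by
        apply Set.eq_empty_of_forall_notMem
        intro η hη
        have heq : Finset.restrict (∅ : Finset ℤ) η = Finset.restrict ∅ η0 := by
          funext i
          exact absurd i.2 (Finset.notMem_empty _)
        have hη' : Finset.restrict (∅ : Finset ℤ) η ∈ S := hη
        rw [heq] at hη'
        exact hmem hη'
      rw [hempty]; simp
  · set m := s.min' hs with hm
    set M := s.max' hs with hM
    set k := (M - m).toNat with hk
    have hmle : ∀ i ∈ s, m ≤ i := fun i hi => s.min'_le i hi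
    have hMge : ∀ i ∈ s, i ≤ M := fun i hi => s.le_max' i hi
    have hbound : ∀ i ∈ s, (i - m).toNat < k + 1 := by
      intro i hi
      have h1 := hmle i hi
      have h2 := hMge i hi
      omega
    set rmap : (ℤ → α) → (Fin (k+1) → α) := fun η i => η (m + (i : ℕ)) with hr
    set E : Set (Fin (k+1) → α) :=
      {g | (fun i : {x // x ∈ s} => g ⟨(i.1 - m).toNat, hbound i.1 i.2⟩) ∈ S} with hE
    have hcyl : MeasureTheory.cylinder s S = rmap ⁻¹' E := by
      ext η
      show Finset.restrict s η ∈ S ↔ η ∈ rmap ⁻¹' E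
      have hmem2 : η ∈ rmap ⁻¹' E ↔
          (fun i : {x // x ∈ s} => rmap η ⟨(i.1 - m).toNat, hbound i.1 i.2⟩) ∈ S :=
        Iff.rfl
      rw [hmem2]
      have heq : (fun i : {x // x ∈ s} => rmap η ⟨(i.1 - m).toNat, hbound i.1 i.2⟩)
          = Finset.restrict s η := by
        funext i
        show η (m + (((i.1 - m).toNat : ℕ) : ℤ)) = η i.1
        congr 1
        have h1 := hmle i.1 i.2
        omega
      rw [heq]
    rw [hcyl]
    have hdec : rmap ⁻¹' E = ⋃ g ∈ E.toFinite.toFinset, rmap ⁻¹' {g} := by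
      ext η
      simp only [Set.mem_preimage, Set.mem_iUnion, Set.Finite.mem_toFinset,
        Set.mem_singleton_iff]
      constructor
      · intro hη; exact ⟨rmap η, hη, rfl⟩
      · rintro ⟨g, hg, rfl⟩; exact hg
    have hpoint : ∀ g : Fin (k+1) → α, rmap ⁻¹' {g}
        = _root_.cylinder m k
            (fun i => if hlt : i < k + 1 then g ⟨i, hlt⟩ else g ⟨0, Nat.succ_pos k⟩) := by
      intro g
      ext η
      simp only [Set.mem_preimage, Set.mem_singleton_iff, _root_.cylinder, Set.mem_setOf_eq]
      constructor
      · intro hg i hi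
        beta_reduce
        rw [dif_pos (Nat.lt_succ_of_le hi)]
        exact congrFun hg ⟨i, Nat.lt_succ_of_le hi⟩
      · intro hh
        funext i
        have h2 := hh i.1 (Nat.lt_succ_iff.1 i.isLt)
        beta_reduce at h2
        rw [dif_pos i.isLt] at h2
        show η (m + (i : ℕ)) = g i
        rw [h2]
    have hmeas : ∀ g : Fin (k+1) → α, MeasurableSet (rmap ⁻¹' {g}) := by
      intro g; rw [hpoint g]; exact measurableSet_cylinder _ _ _
    have hdisj : (↑E.toFinite.toFinset : Set (Fin (k+1) → α)).PairwiseDisjoint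
        (fun g => rmap ⁻¹' {g}) := by
      intro g1 _ g2 _ hne12
      apply Set.disjoint_left.2
      intro η hη1 hη2
      exact hne12 ((hη1.symm.trans hη2 : g1 = g2))
    rw [hdec, measure_biUnion_finset hdisj (fun g _ => hmeas g),
      measure_biUnion_finset hdisj (fun g _ => hmeas g)]
    apply Finset.sum_congr rfl
    intro g _
    rw [hpoint g]
    exact h m k _

end BiStrip
/-- **Lemma (uniqueness of the ergodic lift over a bi-strip).** In the generic setting,
let `S` be an attracting strip for `G` disjoint from its mirrored strip `τ(S)`, so that
`Π` restricts to bijections of `S` and `τ(S)` onto the bi-strip `S₀ = Π(S)`, and let `μ`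
be the unique ergodic `G`-invariant measure on `S` whose base projection is the symmetric
Markov extension `lam` of `λ₀`. Then `Π_*μ` is the unique ergodic `F`-invariant measure
supported in `S₀` whose base projection is `λ₀`. -/
theorem unique_ergodic_lift_over_bistrip {N : ℕ} (f : Fin N → ℝ → ℝ)
    (part : Fin N → Bool) (hor : OrientPart f part)
    (hcont : ∀ i, Continuous (f i))
    (hinj : ∀ i, Set.InjOn (f i) I01)
    (habs : ∀ i, Set.MapsTo (f i) I01 (interior I01))
    (lam0 : Measure (BSeq N)) [IsProbabilityMeasure lam0]
    (p0 : Fin N → ℝ≥0∞) (P0 : Fin N → Fin N → ℝ≥0∞)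
    (h0 : IsMarkov lam0 p0 P0) (h0s : IsStochastic p0 P0)
    (lam : Measure (ℤ → DSym N))
    (p : DSym N → ℝ≥0∞) (P : DSym N → DSym N → ℝ≥0∞)
    (hlam : IsMarkov lam p P) (hlams : IsStochastic p P)
    (hcompat : CompatA part P) (hsym : SymMarkov p P)
    (hproj : lam.map (projSeq (N := N)) = lam0)
    (φ ψ : SigmaA N part → ℝ) (hφψ : ∀ ω, φ ω < ψ ω)
    (S : Set (SigmaA N part × ℝ)) (hS : S = strip φ ψ)
    (hattr : Gmap f '' S ⊆ interior S)
    (hdisj : Disjoint S (tauMap (N := N) (part := part) '' S))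
    (hbij : Set.BijOn (PiMap (N := N) (part := part)) S
      (PiMap (N := N) (part := part) '' S))
    (hbij' : Set.BijOn (PiMap (N := N) (part := part))
      (tauMap (N := N) (part := part) '' S) (PiMap (N := N) (part := part) '' S))
    (μ : Measure (SigmaA N part × ℝ)) [IsProbabilityMeasure μ]
    (hergμ : Ergodic (Gmap f) μ) (hμS : μ Sᶜ = 0)
    (hμbase : μ.map (baseA (N := N) (part := part)) = lam)
    (huniq : ∀ μ₂ : Measure (SigmaA N part × ℝ), IsProbabilityMeasure μ₂ →
      Ergodic (Gmap f) μ₂ → μ₂ Sᶜ = 0 →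
      μ₂.map (baseA (N := N) (part := part)) = lam → μ₂ = μ) :
    ((μ.map (PiMap (N := N) (part := part))).map Prod.fst = lam0) ∧
    ∀ ν : Measure (BSeq N × ℝ), IsProbabilityMeasure ν → Ergodic (Fmap f) ν →
      ν ((PiMap (N := N) (part := part) '' S)ᶜ) = 0 →
      ν.map Prod.fst = lam0 →
      ν = μ.map (PiMap (N := N) (part := part)) := by
  classical
  have hGmeas : Measurable (Gmap f (part := part)) := BiStrip.meas_Gmap f hcont
  have hFmeas : Measurable (Fmap f (N := N)) := BiStrip.meas_Fmap f hcont
  have hPimeas : Measurable (PiMap (N := N) (part := part)) := BiStrip.meas_PiMap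
  have hbasemeas : Measurable (baseA (N := N) (part := part)) := BiStrip.meas_baseA
  have hprojmeas : Measurable (projSeq (N := N)) := BiStrip.meas_projSeq
  have hm2meas : Measurable (BiStrip.m2 (N := N)) := BiStrip.meas_m2
  have hliftmeas : Measurable (BiStrip.liftB part (N := N)) := BiStrip.meas_liftB
  have hshiftmeas : Measurable (shiftSeq (α := DSym N)) := BiStrip.meas_shiftSeq
  -- Part 1
  have hfstPi : (Prod.fst ∘ PiMap (N := N) (part := part))
      = (projSeq (N := N) ∘ baseA (N := N) (part := part)) := rfl
  have part1 : (μ.map (PiMap (N := N) (part := part))).map Prod.fst = lam0 := by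
    rw [Measure.map_map measurable_fst hPimeas, hfstPi,
      ← Measure.map_map hprojmeas hbasemeas, hμbase, hproj]
  refine ⟨part1, ?_⟩
  intro ν hνprob hergν hνsupp hνbase
  haveI := hνprob
  haveI hlamprob : IsProbabilityMeasure lam := by
    rw [← hμbase]; exact Measure.isProbabilityMeasure_map hbasemeas.aemeasurable
  -- the open core of the strip
  set U : Set (SigmaA N part × ℝ) := interior S with hU
  have hUmeas : MeasurableSet U := isOpen_interior.measurableSet
  have hUS : U ⊆ S := interior_subset
  have hGS : ∀ z ∈ S, Gmap f z ∈ U := fun z hz => hattr (Set.mem_image_of_mem _ hz)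
  -- the section j of Π with values in U (a.e.)
  set j : BSeq N × ℝ → SigmaA N part × ℝ :=
    fun q => if BiStrip.liftB part (q, true) ∈ U then BiStrip.liftB part (q, true)
      else BiStrip.liftB part (q, false) with hjdef
  have hlift_tm : Measurable (fun q : BSeq N × ℝ => BiStrip.liftB part (q, true)) :=
    hliftmeas.comp (measurable_id.prodMk measurable_const)
  have hlift_fm : Measurable (fun q : BSeq N × ℝ => BiStrip.liftB part (q, false)) :=
    hliftmeas.comp (measurable_id.prodMk measurable_const)
  have hjmeas : Measurable j := Measurable.ite (hlift_tm hUmeas) hlift_tm hlift_fm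
  have hjtrue : ∀ q, BiStrip.liftB part (q, true) ∈ U → j q = BiStrip.liftB part (q, true) := by
    intro q hc; rw [hjdef]; simp only [hc, if_true]
  have hjfalse : ∀ q, BiStrip.liftB part (q, true) ∉ U → j q = BiStrip.liftB part (q, false) := by
    intro q hc; rw [hjdef]; simp only [hc, if_false]
  have hPij : ∀ q, PiMap (j q) = q := by
    intro q
    by_cases hc : BiStrip.liftB part (q, true) ∈ U
    · rw [hjtrue q hc]; exact BiStrip.PiMap_lift (q, true)
    · rw [hjfalse q hc]; exact BiStrip.PiMap_lift (q, false)
  -- a.e. the section lands in U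
  set W : Set (BSeq N × ℝ) := ((fun q => BiStrip.liftB part (q, true)) ⁻¹' U)
      ∪ ((fun q => BiStrip.liftB part (q, false)) ⁻¹' U) with hWdef
  have hWmeas : MeasurableSet W := (hlift_tm hUmeas).union (hlift_fm hUmeas)
  have hjW : ∀ q ∈ W, j q ∈ U := by
    intro q hq
    by_cases hc : BiStrip.liftB part (q, true) ∈ U
    · rw [hjtrue q hc]; exact hc
    · rcases hq with hq | hq
      · exact absurd hq hc
      · rw [hjfalse q hc]; exact hq
  have hS0W : PiMap (N := N) (part := part) '' S ⊆ Fmap f ⁻¹' W := by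
    rintro q ⟨z, hzS, rfl⟩
    have hz2 : BiStrip.liftB part (PiMap z, (z.1.1 0).2) = z := BiStrip.lift_recon z
    have hmem : Gmap f (BiStrip.liftB part (PiMap z, (z.1.1 0).2)) ∈ U := by
      rw [hz2]; exact hGS z hzS
    rw [BiStrip.lift_G] at hmem
    show Fmap f (PiMap z) ∈ W
    rw [hWdef]
    cases hbb : xor ((PiMap z, (z.1.1 0).2).2) (!(part (((PiMap z, (z.1.1 0).2)).1.1 0)))
    · right
      show BiStrip.liftB part (Fmap f (PiMap z), false) ∈ U
      rw [← hbb]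
      exact hmem
    · left
      show BiStrip.liftB part (Fmap f (PiMap z), true) ∈ U
      rw [← hbb]
      exact hmem
  have hνW : ν Wᶜ = 0 := by
    have hpre : ν (Fmap f ⁻¹' Wᶜ) = ν Wᶜ :=
      hergν.toMeasurePreserving.measure_preimage hWmeas.compl.nullMeasurableSet
    have hsub : Fmap f ⁻¹' Wᶜ ⊆ (PiMap (N := N) (part := part) '' S)ᶜ := by
      intro q hq hqS
      exact hq (hS0W hqS)
    have hle : ν Wᶜ ≤ 0 := by
      rw [← hpre]
      calc ν (Fmap f ⁻¹' Wᶜ) ≤ ν ((PiMap (N := N) (part := part) '' S)ᶜ) :=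
            measure_mono hsub
        _ = 0 := hνsupp
    exact le_antisymm hle zero_le
  have hjUae : ν ((j ⁻¹' U)ᶜ) = 0 := by
    have hsub : (j ⁻¹' U)ᶜ ⊆ Wᶜ := by
      intro q hq hqW
      exact hq (hjW q hqW)
    exact le_antisymm ((measure_mono hsub).trans hνW.le) zero_le
  have hjUmeas : MeasurableSet (j ⁻¹' U) := hjmeas hUmeas
  -- a.e. semiconjugacy
  have hsemi_ae : (fun q => Gmap f (j q)) =ᵐ[ν] (fun q => j (Fmap f q)) := by
    have h1 : ∀ᵐ q ∂ν, j q ∈ U := by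
      rw [ae_iff]
      have heq : {q | ¬ j q ∈ U} = (j ⁻¹' U)ᶜ := rfl
      rw [heq]; exact hjUae
    have h2 : ∀ᵐ q ∂ν, j (Fmap f q) ∈ U := by
      rw [ae_iff]
      have heq : {q | ¬ j (Fmap f q) ∈ U} = Fmap f ⁻¹' ((j ⁻¹' U)ᶜ) := rfl
      rw [heq, hergν.toMeasurePreserving.measure_preimage
        hjUmeas.compl.nullMeasurableSet]
      exact hjUae
    filter_upwards [h1, h2] with q hq1 hq2
    have hz1 : Gmap f (j q) ∈ U := hGS _ (hUS hq1)
    have e1 : PiMap (Gmap f (j q)) = Fmap f q := by rw [BiStrip.Pi_semiconj, hPij]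
    have e2 : PiMap (j (Fmap f q)) = Fmap f q := hPij _
    exact hbij.injOn (hUS hz1) (hUS hq2) (e1.trans e2.symm)
  -- the lifted measure
  set μ₁ : Measure (SigmaA N part × ℝ) := ν.map j with hμ₁def
  haveI hμ₁prob : IsProbabilityMeasure μ₁ := Measure.isProbabilityMeasure_map hjmeas.aemeasurable
  have hμ₁G : μ₁.map (Gmap f) = μ₁ := by
    rw [hμ₁def, Measure.map_map hGmeas hjmeas]
    have e1 : ν.map (Gmap f ∘ j) = ν.map (j ∘ Fmap f) :=
      Measure.map_congr hsemi_ae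
    rw [e1, ← Measure.map_map hjmeas hFmeas, hergν.toMeasurePreserving.map_eq]
  have hergμ₁ : Ergodic (Gmap f) μ₁ := by
    constructor
    · exact ⟨hGmeas, hμ₁G⟩
    · constructor
      intro s hs hinv
      rw [Filter.eventuallyConst_set']
      have htmeas : MeasurableSet (j ⁻¹' s) := hjmeas hs
      have htinv : Fmap f ⁻¹' (j ⁻¹' s) =ᵐ[ν] j ⁻¹' s := by
        rw [Filter.eventuallyEq_set]
        filter_upwards [hsemi_ae] with q hq
        simp only [Set.mem_preimage]
        constructor
        · intro hmem
          have hGjs : Gmap f (j q) ∈ s := by rw [hq]; exact hmem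
          rw [← hinv]; exact hGjs
        · intro hmem
          have hGjs : Gmap f (j q) ∈ s := by
            have : j q ∈ Gmap f ⁻¹' s := by rw [hinv]; exact hmem
            exact this
          rw [← hq]; exact hGjs
      rcases hergν.quasiErgodic.ae_empty_or_univ₀ htmeas.nullMeasurableSet htinv with h' | h'
      · left
        rw [ae_eq_empty] at h' ⊢
        rw [hμ₁def, Measure.map_apply hjmeas hs]
        exact h'
      · right
        rw [ae_eq_univ] at h' ⊢
        rw [hμ₁def, Measure.map_apply hjmeas hs.compl, Set.preimage_compl]
        exact h'
  have hμ₁S : μ₁ Sᶜ = 0 := by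
    have hUc : μ₁ Uᶜ = 0 := by
      rw [hμ₁def, Measure.map_apply hjmeas hUmeas.compl, Set.preimage_compl]
      exact hjUae
    exact le_antisymm ((measure_mono (Set.compl_subset_compl.2 hUS)).trans hUc.le)
      zero_le
  -- base projection of the lift
  set κ : Measure (ℤ → DSym N) := μ₁.map (baseA (N := N) (part := part)) with hκdef
  haveI hκprob : IsProbabilityMeasure κ := Measure.isProbabilityMeasure_map hbasemeas.aemeasurable
  have hbaseG : (shiftSeq ∘ baseA (N := N) (part := part))
      = (baseA (N := N) (part := part) ∘ Gmap f) := rfl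
  have hκshift : κ.map shiftSeq = κ := by
    rw [hκdef, Measure.map_map hshiftmeas hbasemeas, hbaseG,
      ← Measure.map_map hbasemeas hGmeas, hμ₁G]
  have herglam : Ergodic shiftSeq lam := by
    rw [← hμbase]
    exact BiStrip.ergodic_map_of_semiconj hbasemeas hshiftmeas
      (fun z => (BiStrip.baseA_G f z).symm) hergμ
  -- the symmetrized base identity
  set T0 : Set (BSeq N × ℝ) := (fun q => BiStrip.liftB part (q, true)) ⁻¹' U with hT0def
  have hT0meas : MeasurableSet T0 := hlift_tm hUmeas
  have hq0 : μ.map (fun z : SigmaA N part × ℝ => piA z.1) = lam0 := by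
    have heq : (fun z : SigmaA N part × ℝ => piA z.1)
        = (projSeq (N := N) ∘ baseA (N := N) (part := part)) := rfl
    rw [heq, ← Measure.map_map hprojmeas hbasemeas, hμbase, hproj]
  have hqmeas : Measurable (fun z : SigmaA N part × ℝ => piA z.1) :=
    BiStrip.meas_piA.comp measurable_fst
  have hkey : ∀ A : Set (ℤ → DSym N), MeasurableSet A →
      κ A + (κ.map BiStrip.m2) A = lam A + (lam.map BiStrip.m2) A := by
    intro A hA
    set Bt : Set (BSeq N) := (fun ξ => BiStrip.wfun part ξ true) ⁻¹' A with hBtdef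
    set Bf : Set (BSeq N) := (fun ξ => BiStrip.wfun part ξ false) ⁻¹' A with hBfdef
    have hBtm : MeasurableSet Bt := BiStrip.meas_wfun_fixed true hA
    have hBfm : MeasurableSet Bf := BiStrip.meas_wfun_fixed false hA
    -- ν side
    have hκap : ∀ B : Set (ℤ → DSym N), MeasurableSet B →
        κ B = ν (T0 ∩ Prod.fst ⁻¹' ((fun ξ => BiStrip.wfun part ξ true) ⁻¹' B))
          + ν (T0ᶜ ∩ Prod.fst ⁻¹' ((fun ξ => BiStrip.wfun part ξ false) ⁻¹' B)) := by
      intro B hB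
      have hid : (baseA (N := N) (part := part) ∘ j) ⁻¹' B
          = (T0 ∩ Prod.fst ⁻¹' ((fun ξ => BiStrip.wfun part ξ true) ⁻¹' B))
            ∪ (T0ᶜ ∩ Prod.fst ⁻¹' ((fun ξ => BiStrip.wfun part ξ false) ⁻¹' B)) := by
        ext q
        constructor
        · intro hqB
          have hqB' : baseA (j q) ∈ B := hqB
          by_cases hc : BiStrip.liftB part (q, true) ∈ U
          · left
            refine ⟨hc, ?_⟩
            show BiStrip.wfun part q.1 true ∈ B
            rw [hjtrue q hc] at hqB'
            exact hqB'
          · right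
            refine ⟨hc, ?_⟩
            show BiStrip.wfun part q.1 false ∈ B
            rw [hjfalse q hc] at hqB'
            exact hqB'
        · rintro (⟨hc, hcB⟩ | ⟨hc, hcB⟩)
          · show baseA (j q) ∈ B
            rw [hjtrue q hc]
            exact hcB
          · show baseA (j q) ∈ B
            rw [hjfalse q hc]
            exact hcB
      have hm : κ B = ν ((baseA (N := N) (part := part) ∘ j) ⁻¹' B) := by
        rw [hκdef, hμ₁def, Measure.map_map hbasemeas hjmeas,
          Measure.map_apply (hbasemeas.comp hjmeas) hB]
      have hdis : Disjoint
          (T0 ∩ Prod.fst ⁻¹' ((fun ξ => BiStrip.wfun part ξ true) ⁻¹' B))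
          (T0ᶜ ∩ Prod.fst ⁻¹' ((fun ξ => BiStrip.wfun part ξ false) ⁻¹' B)) :=
        Set.disjoint_of_subset Set.inter_subset_left Set.inter_subset_left
          disjoint_compl_right
      rw [hm, hid, measure_union hdis (hT0meas.compl.inter
        (measurable_fst (BiStrip.meas_wfun_fixed false hB)))]
    have hm2A : MeasurableSet (BiStrip.m2 ⁻¹' A) := hm2meas hA
    have hBgen_t : (fun ξ : BSeq N => BiStrip.wfun part ξ true) ⁻¹' (BiStrip.m2 ⁻¹' A)
        = Bf := by
      ext ξ
      show BiStrip.m2 (BiStrip.wfun part ξ true) ∈ A ↔ BiStrip.wfun part ξ false ∈ A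
      rw [BiStrip.m2_wfun]
      rfl
    have hBgen_f : (fun ξ : BSeq N => BiStrip.wfun part ξ false) ⁻¹' (BiStrip.m2 ⁻¹' A)
        = Bt := by
      ext ξ
      show BiStrip.m2 (BiStrip.wfun part ξ false) ∈ A ↔ BiStrip.wfun part ξ true ∈ A
      rw [BiStrip.m2_wfun]
      rfl
    have hT0add : ∀ X : Set (BSeq N × ℝ), ν (T0 ∩ X) + ν (T0ᶜ ∩ X) = ν X := by
      intro X
      have hh := measure_inter_add_diff (μ := ν) X hT0meas
      rw [Set.inter_comm X T0] at hh
      rw [Set.diff_eq, Set.inter_comm X T0ᶜ] at hh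
      exact hh
    have hνside : κ A + (κ.map BiStrip.m2) A
        = ν (Prod.fst ⁻¹' Bt) + ν (Prod.fst ⁻¹' Bf) := by
      rw [Measure.map_apply hm2meas hA, hκap A hA, hκap _ hm2A, hBgen_t, hBgen_f]
      rw [← hT0add (Prod.fst ⁻¹' Bt), ← hT0add (Prod.fst ⁻¹' Bf)]
      ring
    -- μ side
    have hlamap : ∀ B : Set (ℤ → DSym N), MeasurableSet B →
        lam B = μ ((fun z : SigmaA N part × ℝ => (z.1.1 0).2) ⁻¹' {true}
            ∩ (fun z : SigmaA N part × ℝ => piA z.1) ⁻¹'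
              ((fun ξ => BiStrip.wfun part ξ true) ⁻¹' B))
          + μ (((fun z : SigmaA N part × ℝ => (z.1.1 0).2) ⁻¹' {true})ᶜ
            ∩ (fun z : SigmaA N part × ℝ => piA z.1) ⁻¹'
              ((fun ξ => BiStrip.wfun part ξ false) ⁻¹' B)) := by
      intro B hB
      have hid : (baseA (N := N) (part := part)) ⁻¹' B
          = ((fun z : SigmaA N part × ℝ => (z.1.1 0).2) ⁻¹' {true}
              ∩ (fun z : SigmaA N part × ℝ => piA z.1) ⁻¹'
                ((fun ξ => BiStrip.wfun part ξ true) ⁻¹' B))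
            ∪ (((fun z : SigmaA N part × ℝ => (z.1.1 0).2) ⁻¹' {true})ᶜ
              ∩ (fun z : SigmaA N part × ℝ => piA z.1) ⁻¹'
                ((fun ξ => BiStrip.wfun part ξ false) ⁻¹' B)) := by
        ext z
        have hrec : baseA z = BiStrip.wfun part (piA z.1) ((z.1.1 0).2) :=
          BiStrip.baseA_reconstruct z
        constructor
        · intro hzB
          have hzB' : baseA z ∈ B := hzB
          by_cases hc : (z.1.1 0).2 = true
          · left
            refine ⟨hc, ?_⟩
            show BiStrip.wfun part (piA z.1) true ∈ B
            rw [hrec, hc] at hzB'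
            exact hzB'
          · right
            have hcf : (z.1.1 0).2 = false := by
              revert hc; cases (z.1.1 0).2 <;> simp
            refine ⟨hc, ?_⟩
            show BiStrip.wfun part (piA z.1) false ∈ B
            rw [hrec, hcf] at hzB'
            exact hzB'
        · rintro (⟨hc, hcB⟩ | ⟨hc, hcB⟩)
          · show baseA z ∈ B
            have hc' : (z.1.1 0).2 = true := hc
            rw [hrec, hc']
            exact hcB
          · show baseA z ∈ B
            have hcf : (z.1.1 0).2 = false := by
              have hc' : ¬ ((z.1.1 0).2 = true) := hc
              revert hc'; cases (z.1.1 0).2 <;> simp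
            rw [hrec, hcf]
            exact hcB
      have hm : lam B = μ ((baseA (N := N) (part := part)) ⁻¹' B) := by
        rw [← hμbase, Measure.map_apply hbasemeas hB]
      have hTmmeas : MeasurableSet
          ((fun z : SigmaA N part × ℝ => (z.1.1 0).2) ⁻¹' {true}) :=
        BiStrip.meas_bit0 (MeasurableSet.singleton true)
      have hdis : Disjoint
          ((fun z : SigmaA N part × ℝ => (z.1.1 0).2) ⁻¹' {true}
            ∩ (fun z : SigmaA N part × ℝ => piA z.1) ⁻¹'
              ((fun ξ => BiStrip.wfun part ξ true) ⁻¹' B))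
          (((fun z : SigmaA N part × ℝ => (z.1.1 0).2) ⁻¹' {true})ᶜ
            ∩ (fun z : SigmaA N part × ℝ => piA z.1) ⁻¹'
              ((fun ξ => BiStrip.wfun part ξ false) ⁻¹' B)) :=
        Set.disjoint_of_subset Set.inter_subset_left Set.inter_subset_left
          disjoint_compl_right
      rw [hm, hid, measure_union hdis (hTmmeas.compl.inter
        (hqmeas (BiStrip.meas_wfun_fixed false hB)))]
    have hTmadd : ∀ X : Set (SigmaA N part × ℝ),
        μ ((fun z : SigmaA N part × ℝ => (z.1.1 0).2) ⁻¹' {true} ∩ X)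
          + μ (((fun z : SigmaA N part × ℝ => (z.1.1 0).2) ⁻¹' {true})ᶜ ∩ X) = μ X := by
      intro X
      have hTmmeas : MeasurableSet
          ((fun z : SigmaA N part × ℝ => (z.1.1 0).2) ⁻¹' {true}) :=
        BiStrip.meas_bit0 (MeasurableSet.singleton true)
      have hh := measure_inter_add_diff (μ := μ) X hTmmeas
      rw [Set.inter_comm X] at hh
      rw [Set.diff_eq, Set.inter_comm X] at hh
      exact hh
    have hμside : lam A + (lam.map BiStrip.m2) A
        = μ ((fun z : SigmaA N part × ℝ => piA z.1) ⁻¹' Bt)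
          + μ ((fun z : SigmaA N part × ℝ => piA z.1) ⁻¹' Bf) := by
      rw [Measure.map_apply hm2meas hA, hlamap A hA, hlamap _ hm2A, hBgen_t, hBgen_f]
      rw [← hTmadd ((fun z : SigmaA N part × ℝ => piA z.1) ⁻¹' Bt),
        ← hTmadd ((fun z : SigmaA N part × ℝ => piA z.1) ⁻¹' Bf)]
      ring
    rw [hνside, hμside]
    rw [show ν (Prod.fst ⁻¹' Bt) = lam0 Bt by
      rw [← hνbase, Measure.map_apply measurable_fst hBtm]]
    rw [show ν (Prod.fst ⁻¹' Bf) = lam0 Bf by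
      rw [← hνbase, Measure.map_apply measurable_fst hBfm]]
    rw [show μ ((fun z : SigmaA N part × ℝ => piA z.1) ⁻¹' Bt) = lam0 Bt by
      rw [← hq0, Measure.map_apply hqmeas hBtm]]
    rw [show μ ((fun z : SigmaA N part × ℝ => piA z.1) ⁻¹' Bf) = lam0 Bf by
      rw [← hq0, Measure.map_apply hqmeas hBfm]]
  -- the symmetric Markov measure is mirror invariant
  have hm2lam : lam.map BiStrip.m2 = lam := by
    haveI : IsProbabilityMeasure (lam.map (BiStrip.m2 (N := N))) :=
      Measure.isProbabilityMeasure_map hm2meas.aemeasurable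
    apply BiStrip.ext_of_cylinders
    intro m k w
    rw [Measure.map_apply hm2meas (BiStrip.measurableSet_cylinder m k w)]
    have hpre : BiStrip.m2 ⁻¹' (_root_.cylinder m k w)
        = _root_.cylinder m k (fun i => ((w i).1, !(w i).2)) := by
      ext η
      simp only [Set.mem_preimage, _root_.cylinder, Set.mem_setOf_eq]
      have hb : ∀ (x y : Bool), ((!x) = y) ↔ (x = !y) := by decide
      constructor
      · intro hh i hi
        have h2 := hh i hi
        have hm2e : BiStrip.m2 η (m + (i:ℤ))
            = ((η (m + (i:ℤ))).1, !(η (m + (i:ℤ))).2) := rfl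
        rw [hm2e, Prod.ext_iff] at h2
        rw [Prod.ext_iff]
        exact ⟨h2.1, (hb _ _).1 h2.2⟩
      · intro hh i hi
        have h2 := hh i hi
        rw [Prod.ext_iff] at h2
        have hm2e : BiStrip.m2 η (m + (i:ℤ))
            = ((η (m + (i:ℤ))).1, !(η (m + (i:ℤ))).2) := rfl
        rw [hm2e, Prod.ext_iff]
        refine ⟨h2.1, ?_⟩
        rw [h2.2]
        simp
    rw [hpre, hlam m k _, hlam m k w]
    congr 1
    · exact (hsym.1 (w 0)).symm
    · apply Finset.prod_congr rfl
      intro i _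
      exact (hsym.2 (w i) (w (i+1))).symm
  -- conclude κ = lam by ergodicity
  have hκlam : κ = lam := by
    have hac : κ ≪ lam := by
      refine Measure.AbsolutelyContinuous.mk ?_
      intro s hs h0'
      have hk := hkey s hs
      rw [hm2lam, h0'] at hk
      have hle : κ s ≤ κ s + (κ.map BiStrip.m2) s := le_self_add
      rw [hk] at hle
      simpa using hle
    exact BiStrip.eq_of_ergodic_absCont (T := shiftSeq) (T' := fun η n => η (n - 1))
      (measurable_pi_lambda _ fun n => measurable_pi_apply (n - 1))
      (fun x => by funext n; show x (n - 1 + 1) = x n; congr 1; omega)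
      (fun x => by funext n; show x (n + 1 - 1) = x n; congr 1; omega)
      herglam hκshift hac
  have hμ₁base : μ₁.map (baseA (N := N) (part := part)) = lam := by
    rw [← hκdef]; exact hκlam
  have hμ₁eq : μ₁ = μ := huniq μ₁ hμ₁prob hergμ₁ hμ₁S hμ₁base
  have hfinal : μ₁.map (PiMap (N := N) (part := part)) = ν := by
    rw [hμ₁def, Measure.map_map hPimeas hjmeas]
    have hcomp : (PiMap (N := N) (part := part) ∘ j) = id := funext hPij
    rw [hcomp, Measure.map_id]
  rw [← hfinal, hμ₁eq]
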